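/- arXiv:1706.06342 — 3 statements merged into one kernel-verified Lean document; each statement's English description precedes it below -/
import Mathlib

section
/- Let π : ℝ≥0 × X → X be a jointly continuous semiflow of the additive monoid ℝ≥0 (with its usual topology) on a Polish space X with at least two points. If the semiflow is topologically weakly mixing, then it is densely multi-dimensional Li-Yorke chaotic: for every increasing sequence F₁ ⊆ F₂ ⊆ ⋯ of compact subsets of ℝ≥0 there exists a dense uncountable set Θ ⊆ X such that for every k ≥ 2 and all pairwise distinct x₁,…,x_k ∈ Θ there exist a point p ∈ X and sequences (t_n), (s_n) in ℝ≥0 with s_n ∉ F_n for all n, such that π(t_n, x_i) → p for each i and π(s_n, x_i) → x_i for each i, as n → ∞. -/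
open Filter Topology Set

section Aux

variable {X : Type*} [MetricSpace X] {π : NNReal → X → X}

private lemma contt (hcont : Continuous fun q : NNReal × X => π q.1 q.2) (r : NNReal) :
    Continuous (π r) :=
  hcont.comp (Continuous.prodMk continuous_const continuous_id)

private lemma hit_one
    (hwm : ∀ W₁ W₂ : Set (X × X), IsOpen W₁ → W₁.Nonempty → IsOpen W₂ → W₂.Nonempty →
      ∃ t : NNReal, ∃ w ∈ W₁, (π t w.1, π t w.2) ∈ W₂)
    {U V : Set X} (hU : IsOpen U) (hUne : U.Nonempty) (hV : IsOpen V) (hVne : V.Nonempty) :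
    ∃ t : NNReal, ∃ x ∈ U, π t x ∈ V := by
  obtain ⟨t, w, hw, hw2⟩ := hwm (U ×ˢ U) (V ×ˢ V) (hU.prod hU) (hUne.prod hUne)
    (hV.prod hV) (hVne.prod hVne)
  exact ⟨t, w.1, hw.1, hw2.1⟩

private lemma fpair
    (hadd : ∀ s t : NNReal, ∀ x : X, π s (π t x) = π (s + t) x)
    (hcont : Continuous fun q : NNReal × X => π q.1 q.2)
    (hwm : ∀ W₁ W₂ : Set (X × X), IsOpen W₁ → W₁.Nonempty → IsOpen W₂ → W₂.Nonempty →
      ∃ t : NNReal, ∃ w ∈ W₁, (π t w.1, π t w.2) ∈ W₂)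
    {U₁ V₁ U₂ V₂ : Set X} (hU₁ : IsOpen U₁) (hU₁n : U₁.Nonempty) (hV₁ : IsOpen V₁)
    (hV₁n : V₁.Nonempty) (hU₂ : IsOpen U₂) (hU₂n : U₂.Nonempty) (hV₂ : IsOpen V₂)
    (hV₂n : V₂.Nonempty) :
    ∃ U₃ V₃ : Set X, IsOpen U₃ ∧ U₃.Nonempty ∧ IsOpen V₃ ∧ V₃.Nonempty ∧
      ∀ t x, x ∈ U₃ → π t x ∈ V₃ →
        (∃ y ∈ U₁, π t y ∈ V₁) ∧ (∃ y ∈ U₂, π t y ∈ V₂) := by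
  obtain ⟨r, w, hw, hw2⟩ := hwm (U₁ ×ˢ V₁) (U₂ ×ˢ V₂) (hU₁.prod hV₁) (hU₁n.prod hV₁n)
    (hU₂.prod hV₂) (hU₂n.prod hV₂n)
  refine ⟨U₁ ∩ π r ⁻¹' U₂, V₁ ∩ π r ⁻¹' V₂,
    hU₁.inter (hU₂.preimage (contt hcont r)), ⟨w.1, hw.1, hw2.1⟩,
    hV₁.inter (hV₂.preimage (contt hcont r)), ⟨w.2, hw.2, hw2.2⟩, ?_⟩
  intro t x hx hpx
  refine ⟨⟨x, hx.1, hpx.1⟩, ⟨π r x, hx.2, ?_⟩⟩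
  have h1 : π r (π t x) ∈ V₂ := hpx.2
  rw [hadd] at h1
  rw [hadd, add_comm]
  exact h1

private lemma freduce
    (hadd : ∀ s t : NNReal, ∀ x : X, π s (π t x) = π (s + t) x)
    (hcont : Continuous fun q : NNReal × X => π q.1 q.2)
    (hwm : ∀ W₁ W₂ : Set (X × X), IsOpen W₁ → W₁.Nonempty → IsOpen W₂ → W₂.Nonempty →
      ∃ t : NNReal, ∃ w ∈ W₁, (π t w.1, π t w.2) ∈ W₂)
    (hX : Nonempty X) (L : List (Set X × Set X))
    (hL : ∀ p ∈ L, IsOpen p.1 ∧ p.1.Nonempty ∧ IsOpen p.2 ∧ p.2.Nonempty) :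
    ∃ U V : Set X, IsOpen U ∧ U.Nonempty ∧ IsOpen V ∧ V.Nonempty ∧
      ∀ t x, x ∈ U → π t x ∈ V → ∀ p ∈ L, ∃ y ∈ p.1, π t y ∈ p.2 := by
  induction L with
  | nil =>
      exact ⟨univ, univ, isOpen_univ, univ_nonempty, isOpen_univ, univ_nonempty, by simp⟩
  | cons a L ih =>
      obtain ⟨U, V, hU, hUn, hV, hVn, hprop⟩ := ih fun p hp => hL p (List.mem_cons_of_mem a hp)
      obtain ⟨ha1, ha1n, ha2, ha2n⟩ := hL a (List.mem_cons_self)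
      obtain ⟨U₃, V₃, hU₃, hU₃n, hV₃, hV₃n, hp₃⟩ :=
        fpair hadd hcont hwm ha1 ha1n ha2 ha2n hU hUn hV hVn
      refine ⟨U₃, V₃, hU₃, hU₃n, hV₃, hV₃n, ?_⟩
      intro t x hx hpx p hp
      obtain ⟨h1, h2⟩ := hp₃ t x hx hpx
      rcases List.mem_cons.1 hp with rfl | hp
      · exact h1
      · obtain ⟨y, hy, hpy⟩ := h2
        exact hprop t y hy hpy p hp

end Aux


section Aux2

variable {X : Type*} [MetricSpace X] {π : NNReal → X → X}

private lemma contt' (hcont : Continuous fun q : NNReal × X => π q.1 q.2) (r : NNReal) :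
    Continuous (π r) :=
  hcont.comp (Continuous.prodMk continuous_const continuous_id)

private lemma two_in_open
    (hnontriv : ∃ a b : X, a ≠ b)
    (hwm : ∀ W₁ W₂ : Set (X × X), IsOpen W₁ → W₁.Nonempty → IsOpen W₂ → W₂.Nonempty →
      ∃ t : NNReal, ∃ w ∈ W₁, (π t w.1, π t w.2) ∈ W₂)
    {U : Set X} (hU : IsOpen U) (hUne : U.Nonempty) :
    ∃ a ∈ U, ∃ b ∈ U, a ≠ b := by
  by_contra hcon
  push_neg at hcon
  obtain ⟨a, b, hab⟩ := hnontriv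
  have hd : (0:ℝ) < dist a b / 2 := by
    have := dist_pos.2 hab
    linarith
  obtain ⟨t, w, hw, hw2⟩ := hwm (U ×ˢ U) (Metric.ball a (dist a b / 2) ×ˢ Metric.ball b (dist a b / 2))
    (hU.prod hU) (hUne.prod hUne)
    (Metric.isOpen_ball.prod Metric.isOpen_ball)
    ((Metric.nonempty_ball.2 hd).prod (Metric.nonempty_ball.2 hd))
  have he : w.1 = w.2 := hcon w.1 hw.1 w.2 hw.2
  have h1 : dist (π t w.1) a < dist a b / 2 := Metric.mem_ball.1 hw2.1
  have h2 : dist (π t w.1) b < dist a b / 2 := by rw [he]; exact Metric.mem_ball.1 hw2.2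
  have : dist a b ≤ dist (π t w.1) a + dist (π t w.1) b := by
    rw [dist_comm (π t w.1) a]
    exact dist_triangle a (π t w.1) b
  linarith

private lemma delay
    (hcont : Continuous fun q : NNReal × X => π q.1 q.2)
    (hid : ∀ x : X, π 0 x = x)
    (hnontriv : ∃ a b : X, a ≠ b) :
    ∃ (A B : Set X) (δ : NNReal), IsOpen A ∧ A.Nonempty ∧ IsOpen B ∧ B.Nonempty ∧ 0 < δ ∧
      ∀ (t : NNReal) x, x ∈ A → π t x ∈ B → δ ≤ t := by
  obtain ⟨a, b, hab⟩ := hnontriv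
  set ε : ℝ := dist a b / 3 with hεdef
  have hε0 : 0 < ε := by
    have := dist_pos.2 hab
    simp only [hεdef]
    linarith
  have hca : ContinuousAt (fun q : NNReal × X => π q.1 q.2) (0, a) := hcont.continuousAt
  rw [Metric.continuousAt_iff] at hca
  obtain ⟨δ, hδ0, hδ⟩ := hca ε hε0
  refine ⟨Metric.ball a (δ/2), Metric.ball b ε, Real.toNNReal (δ/2), Metric.isOpen_ball,
    Metric.nonempty_ball.2 (by linarith), Metric.isOpen_ball, Metric.nonempty_ball.2 hε0,
    by simp [Real.toNNReal_pos]; linarith, ?_⟩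
  intro t x hx hpx
  by_contra hlt
  push_neg at hlt
  have htr : (t : ℝ) < δ/2 := by
    have := (Real.lt_toNNReal_iff_coe_lt).1 hlt
    exact this
  have hdq : dist ((t, x) : NNReal × X) ((0 : NNReal), a) < δ := by
    rw [Prod.dist_eq]
    apply max_lt
    · rw [NNReal.dist_eq]
      simp only [NNReal.coe_zero, sub_zero]
      rw [abs_of_nonneg t.coe_nonneg]
      linarith
    · calc dist x a < δ/2 := Metric.mem_ball.1 hx
        _ < δ := by linarith
  have h1 : dist (π t x) (π 0 a) < ε := hδ hdq
  rw [hid] at h1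
  have h2 : dist (π t x) b < ε := Metric.mem_ball.1 hpx
  have : dist a b ≤ dist (π t x) a + dist (π t x) b := by
    rw [dist_comm (π t x) a]
    exact dist_triangle a (π t x) b
  simp only [hεdef] at h1 h2
  linarith

end Aux2


section Aux3

variable {X : Type*} [MetricSpace X] {π : NNReal → X → X}

private lemma contt3 (hcont : Continuous fun q : NNReal × X => π q.1 q.2) (r : NNReal) :
    Continuous (π r) :=
  hcont.comp (Continuous.prodMk continuous_const continuous_id)

private lemma hit_one3
    (hwm : ∀ W₁ W₂ : Set (X × X), IsOpen W₁ → W₁.Nonempty → IsOpen W₂ → W₂.Nonempty →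
      ∃ t : NNReal, ∃ w ∈ W₁, (π t w.1, π t w.2) ∈ W₂)
    {U V : Set X} (hU : IsOpen U) (hUne : U.Nonempty) (hV : IsOpen V) (hVne : V.Nonempty) :
    ∃ t : NNReal, ∃ x ∈ U, π t x ∈ V := by
  obtain ⟨t, w, hw, hw2⟩ := hwm (U ×ˢ U) (V ×ˢ V) (hU.prod hU) (hUne.prod hUne)
    (hV.prod hV) (hVne.prod hVne)
  exact ⟨t, w.1, hw.1, hw2.1⟩

private lemma hit_ge
    (hcont : Continuous fun q : NNReal × X => π q.1 q.2)
    (hid : ∀ x : X, π 0 x = x)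
    (hadd : ∀ s t : NNReal, ∀ x : X, π s (π t x) = π (s + t) x)
    (hnontriv : ∃ a b : X, a ≠ b)
    (hwm : ∀ W₁ W₂ : Set (X × X), IsOpen W₁ → W₁.Nonempty → IsOpen W₂ → W₂.Nonempty →
      ∃ t : NNReal, ∃ w ∈ W₁, (π t w.1, π t w.2) ∈ W₂)
    {U V : Set X} (hU : IsOpen U) (hUne : U.Nonempty) (hV : IsOpen V) (hVne : V.Nonempty)
    (c : NNReal) :
    ∃ t : NNReal, c ≤ t ∧ ∃ x ∈ U, π t x ∈ V := by
  obtain ⟨A, B, δ, hA, hAne, hB, hBne, hδ0, hdelay⟩ := delay hcont hid hnontriv (π := π)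
  have claim : ∀ m : ℕ, ∃ W : Set X, IsOpen W ∧ W.Nonempty ∧
      ∀ x ∈ W, ∃ d : NNReal, (m : NNReal) * δ ≤ d ∧ π d x ∈ V := by
    intro m
    induction m with
    | zero =>
        exact ⟨V, hV, hVne, fun x hx => ⟨0, by simp, by rwa [hid]⟩⟩
    | succ m ih =>
        obtain ⟨W, hW, hWne, hWp⟩ := ih
        obtain ⟨r, y, hyB, hyW⟩ := hit_one3 hwm hB hBne hW hWne
        have hB' : IsOpen (B ∩ π r ⁻¹' W) := hB.inter (hW.preimage (contt3 hcont r))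
        have hB'ne : (B ∩ π r ⁻¹' W).Nonempty := ⟨y, hyB, hyW⟩
        obtain ⟨q, z, hzA, hzB'⟩ := hit_one3 hwm hA hAne hB' hB'ne
        have hqδ : δ ≤ q := hdelay q z hzA hzB'.1
        refine ⟨A ∩ π q ⁻¹' (B ∩ π r ⁻¹' W),
          hA.inter (hB'.preimage (contt3 hcont q)), ⟨z, hzA, hzB'⟩, ?_⟩
        intro x hx
        obtain ⟨d, hd, hdV⟩ := hWp (π r (π q x)) hx.2.2
        refine ⟨d + (r + q), ?_, ?_⟩
        · have : ((m : NNReal) + 1) * δ = (m : NNReal) * δ + δ := by ring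
          rw [Nat.cast_succ, this]
          have h1 : δ ≤ r + q := le_add_left hqδ
          exact add_le_add hd h1
        · have e1 : π d (π r (π q x)) ∈ V := hdV
          rw [hadd, hadd] at e1
          convert e1 using 2
          ring
  obtain ⟨m, hm⟩ := exists_nat_ge (c / δ)
  obtain ⟨W, hW, hWne, hWp⟩ := claim m
  obtain ⟨t₀, x, hx, hpx⟩ := hit_one3 hwm hU hUne hW hWne
  obtain ⟨d, hd, hdV⟩ := hWp (π t₀ x) hpx
  refine ⟨d + t₀, ?_, x, hx, ?_⟩
  · have hc : c ≤ (m : NNReal) * δ := by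
      rw [← div_le_iff₀ hδ0]
      exact hm
    exact le_add_right (hc.trans hd)
  · rw [← hadd]
    exact hdV

private lemma hit_list
    (hcont : Continuous fun q : NNReal × X => π q.1 q.2)
    (hid : ∀ x : X, π 0 x = x)
    (hadd : ∀ s t : NNReal, ∀ x : X, π s (π t x) = π (s + t) x)
    (hnontriv : ∃ a b : X, a ≠ b)
    (hwm : ∀ W₁ W₂ : Set (X × X), IsOpen W₁ → W₁.Nonempty → IsOpen W₂ → W₂.Nonempty →
      ∃ t : NNReal, ∃ w ∈ W₁, (π t w.1, π t w.2) ∈ W₂)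
    (L : List (Set X × Set X))
    (hL : ∀ p ∈ L, IsOpen p.1 ∧ p.1.Nonempty ∧ IsOpen p.2 ∧ p.2.Nonempty)
    (c : NNReal) :
    ∃ t : NNReal, c ≤ t ∧ ∀ p ∈ L, ∃ x ∈ p.1, π t x ∈ p.2 := by
  have hX : Nonempty X := ⟨hnontriv.choose⟩
  obtain ⟨U, V, hU, hUn, hV, hVn, hprop⟩ := freduce hadd hcont hwm hX L hL
  obtain ⟨t, hct, x, hx, hpx⟩ := hit_ge hcont hid hadd hnontriv hwm hU hUn hV hVn c
  exact ⟨t, hct, hprop t x hx hpx⟩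

end Aux3


section Aux4

variable {X : Type*} [MetricSpace X] {π : NNReal → X → X}

private lemma shrink {U : Set X} (hU : IsOpen U) (hUne : U.Nonempty) {r : ℝ} (hr : 0 < r) :
    ∃ V : Set X, IsOpen V ∧ V.Nonempty ∧ closure V ⊆ U ∧ ∃ c, V ⊆ Metric.ball c r := by
  obtain ⟨x, hx⟩ := hUne
  obtain ⟨ε, hε0, hεU⟩ := Metric.isOpen_iff.1 hU x hx
  set ρ : ℝ := min (ε/2) (r/2) with hρdef
  have hρ0 : 0 < ρ := lt_min (by linarith) (by linarith)
  refine ⟨Metric.ball x ρ, Metric.isOpen_ball, Metric.nonempty_ball.2 hρ0, ?_, x, ?_⟩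
  · refine subset_trans Metric.closure_ball_subset_closedBall (subset_trans ?_ hεU)
    apply Metric.closedBall_subset_ball
    calc ρ ≤ ε/2 := min_le_left _ _
      _ < ε := by linarith
  · apply Metric.ball_subset_ball
    calc ρ ≤ r/2 := min_le_right _ _
      _ ≤ r := by linarith

private lemma split
    (hnontriv : ∃ a b : X, a ≠ b)
    (hwm : ∀ W₁ W₂ : Set (X × X), IsOpen W₁ → W₁.Nonempty → IsOpen W₂ → W₂.Nonempty →
      ∃ t : NNReal, ∃ w ∈ W₁, (π t w.1, π t w.2) ∈ W₂)
    {U : Set X} (hU : IsOpen U) (hUne : U.Nonempty) :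
    ∃ V W : Set X, IsOpen V ∧ V.Nonempty ∧ IsOpen W ∧ W.Nonempty ∧
      closure V ⊆ U ∧ closure W ⊆ U ∧ closure V ∩ closure W = ∅ := by
  obtain ⟨a, ha, b, hb, hab⟩ := two_in_open hnontriv hwm hU hUne
  obtain ⟨εa, hεa0, hεaU⟩ := Metric.isOpen_iff.1 hU a ha
  obtain ⟨εb, hεb0, hεbU⟩ := Metric.isOpen_iff.1 hU b hb
  have hd0 : 0 < dist a b := dist_pos.2 hab
  set ρ : ℝ := min (min (εa/2) (εb/2)) (dist a b / 3) with hρdef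
  have hρ0 : 0 < ρ := lt_min (lt_min (by linarith) (by linarith)) (by linarith)
  refine ⟨Metric.ball a ρ, Metric.ball b ρ, Metric.isOpen_ball, Metric.nonempty_ball.2 hρ0,
    Metric.isOpen_ball, Metric.nonempty_ball.2 hρ0, ?_, ?_, ?_⟩
  · refine subset_trans Metric.closure_ball_subset_closedBall (subset_trans ?_ hεaU)
    apply Metric.closedBall_subset_ball
    calc ρ ≤ min (εa/2) (εb/2) := min_le_left _ _
      _ ≤ εa/2 := min_le_left _ _
      _ < εa := by linarith
  · refine subset_trans Metric.closure_ball_subset_closedBall (subset_trans ?_ hεbU)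
    apply Metric.closedBall_subset_ball
    calc ρ ≤ min (εa/2) (εb/2) := min_le_left _ _
      _ ≤ εb/2 := min_le_right _ _
      _ < εb := by linarith
  · rw [eq_empty_iff_forall_notMem]
    rintro x ⟨hx1, hx2⟩
    have h1 : dist x a ≤ ρ := Metric.mem_closedBall.1 (Metric.closure_ball_subset_closedBall hx1)
    have h2 : dist x b ≤ ρ := Metric.mem_closedBall.1 (Metric.closure_ball_subset_closedBall hx2)
    have hρd : ρ ≤ dist a b / 3 := min_le_right _ _
    have : dist a b ≤ dist x a + dist x b := by
      rw [dist_comm x a]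
      exact dist_triangle a x b
    linarith

private def boolLists : ℕ → List (List Bool)
  | 0 => [[]]
  | k+1 => (boolLists k).flatMap (fun l => [l ++ [false], l ++ [true]])

private lemma mem_boolLists : ∀ k (l : List Bool), l ∈ boolLists k ↔ l.length = k := by
  intro k
  induction k with
  | zero => intro l; simp [boolLists, List.length_eq_zero_iff]
  | succ k ih =>
      intro l
      constructor
      · intro h
        rw [boolLists, List.mem_flatMap] at h
        obtain ⟨a, ha, h⟩ := h
        have hlen : a.length = k := (ih a).1 ha
        simp only [List.mem_cons, List.mem_singleton] at h
        rcases h with rfl | h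
        · simp [hlen]
        · simp only [List.not_mem_nil, or_false] at h
          subst h
          simp [hlen]
      · intro h
        have hne : l ≠ [] := by
          intro h0
          rw [h0] at h
          simp at h
        rw [boolLists, List.mem_flatMap]
        refine ⟨l.dropLast, (ih _).2 ?_, ?_⟩
        · rw [List.length_dropLast, h]
          simp
        · have hl : l.dropLast ++ [l.getLast hne] = l := List.dropLast_append_getLast hne
          cases hb : l.getLast hne
          · rw [hb] at hl
            rw [← hl]
            simp
          · rw [hb] at hl
            rw [← hl]
            simp

private def nodes (n : ℕ) : List (ℕ × List Bool) :=
  (List.range (n+1)).flatMap fun m => (boolLists (n - m)).map fun l => (m, l)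

private lemma mem_nodes (n m : ℕ) (l : List Bool) :
    (m, l) ∈ nodes n ↔ m + l.length = n := by
  rw [nodes, List.mem_flatMap]
  constructor
  · rintro ⟨m', hm', h⟩
    rw [List.mem_map] at h
    obtain ⟨l', hl', he⟩ := h
    injection he with he1 he2
    rw [he1] at hm' hl'
    rw [he2] at hl'
    have h1 : m < n + 1 := List.mem_range.1 hm'
    have h2 : l.length = n - m := (mem_boolLists _ _).1 hl'
    omega
  · intro h
    refine ⟨m, List.mem_range.2 (by omega), ?_⟩
    rw [List.mem_map]
    exact ⟨l, (mem_boolLists _ _).2 (by omega), rfl⟩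

end Aux4


section Aux5

variable {X : Type*} [MetricSpace X] {π : NNReal → X → X}

private lemma contt5 (hcont : Continuous fun q : NNReal × X => π q.1 q.2) (r : NNReal) :
    Continuous (π r) :=
  hcont.comp (Continuous.prodMk continuous_const continuous_id)

private lemma step
    (hcont : Continuous fun q : NNReal × X => π q.1 q.2)
    (hid : ∀ x : X, π 0 x = x)
    (hadd : ∀ s t : NNReal, ∀ x : X, π s (π t x) = π (s + t) x)
    (hnontriv : ∃ a b : X, a ≠ b)
    (hwm : ∀ W₁ W₂ : Set (X × X), IsOpen W₁ → W₁.Nonempty → IsOpen W₂ → W₂.Nonempty →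
      ∃ t : NNReal, ∃ w ∈ W₁, (π t w.1, π t w.2) ∈ W₂)
    (y : X) (B : ℕ → Set X) (hB : ∀ k, IsOpen (B k) ∧ (B k).Nonempty)
    (c : NNReal) (n : ℕ) (f : ℕ × List Bool → Set X)
    (hf : ∀ m l, m + List.length l = n → IsOpen (f (m,l)) ∧ (f (m,l)).Nonempty) :
    ∃ (g : ℕ × List Bool → Set X) (τ σ : NNReal),
      c ≤ σ ∧
      (∀ m l, m + List.length l = n + 1 → IsOpen (g (m,l)) ∧ (g (m,l)).Nonempty ∧
         ∃ c0, g (m,l) ⊆ Metric.ball c0 ((1/2 : ℝ)^(n+1))) ∧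
      (g (n+1, []) ⊆ B (n+1)) ∧
      (∀ m l, m + List.length l = n →
        (∀ b, closure (g (m, l ++ [b])) ⊆ f (m, l)) ∧
        (closure (g (m, l ++ [false])) ∩ closure (g (m, l ++ [true])) = ∅) ∧
        (∀ b, ∀ x ∈ closure (g (m, l ++ [b])),
           dist (π τ x) y ≤ (1/2 : ℝ)^n ∧ π σ x ∈ f (m, l))) := by
  classical
  have hrn : (0:ℝ) < (1/2)^n := by positivity
  have hrn1 : (0:ℝ) < (1/2)^(n+1) := by positivity
  -- split each stage-n set into two pieces with disjoint closures
  have hsplit : ∀ p : ℕ × List Bool, (IsOpen (f p) ∧ (f p).Nonempty) →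
      ∃ A₀ A₁ : Set X, (IsOpen A₀ ∧ A₀.Nonempty) ∧ (IsOpen A₁ ∧ A₁.Nonempty) ∧
        closure A₀ ⊆ f p ∧ closure A₁ ⊆ f p ∧ closure A₀ ∩ closure A₁ = ∅ := by
    rintro p ⟨h1, h2⟩
    obtain ⟨V, W, hV, hVn, hW, hWn, hVc, hWc, hdisj⟩ := split hnontriv hwm h1 h2
    exact ⟨V, W, ⟨hV, hVn⟩, ⟨hW, hWn⟩, hVc, hWc, hdisj⟩
  choose! A₀ A₁ hA using hsplit
  set A : ℕ × List Bool → Bool → Set X := fun p b => cond b (A₁ p) (A₀ p) with hAdef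
  have hfp : ∀ p ∈ nodes n, IsOpen (f p) ∧ (f p).Nonempty := by
    rintro ⟨m, l⟩ hp
    exact hf m l ((mem_nodes n m l).1 hp)
  have hAb : ∀ p ∈ nodes n, ∀ b, IsOpen (A p b) ∧ (A p b).Nonempty ∧ closure (A p b) ⊆ f p := by
    intro p hp b
    obtain ⟨h01, h11, hc0, hc1, hdisj⟩ := hA p (hfp p hp)
    cases b
    · exact ⟨h01.1, h01.2, hc0⟩
    · exact ⟨h11.1, h11.2, hc1⟩
  have hAdisj : ∀ p ∈ nodes n, closure (A p false) ∩ closure (A p true) = ∅ := by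
    intro p hp
    exact (hA p (hfp p hp)).2.2.2.2
  -- first hitting time: send everything close to y
  set ball1 : Set X := Metric.ball y ((1/2:ℝ)^n) with hball1
  have hball1o : IsOpen ball1 := Metric.isOpen_ball
  have hball1n : ball1.Nonempty := Metric.nonempty_ball.2 hrn
  set L₁ : List (Set X × Set X) :=
    (nodes n).flatMap (fun p => [(A p false, ball1), (A p true, ball1)]) with hL₁def
  have hmemL₁ : ∀ p ∈ nodes n, ∀ b, (A p b, ball1) ∈ L₁ := by
    intro p hp b
    rw [hL₁def, List.mem_flatMap]
    refine ⟨p, hp, ?_⟩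
    cases b <;> simp
  have hL₁ : ∀ q ∈ L₁, IsOpen q.1 ∧ q.1.Nonempty ∧ IsOpen q.2 ∧ q.2.Nonempty := by
    intro q hq
    rw [hL₁def, List.mem_flatMap] at hq
    obtain ⟨p, hp, hq⟩ := hq
    simp only [List.mem_cons, List.mem_singleton, List.not_mem_nil, or_false] at hq
    rcases hq with rfl | rfl
    · exact ⟨(hAb p hp false).1, (hAb p hp false).2.1, hball1o, hball1n⟩
    · exact ⟨(hAb p hp true).1, (hAb p hp true).2.1, hball1o, hball1n⟩
  obtain ⟨τ, -, hτ⟩ := hit_list hcont hid hadd hnontriv hwm L₁ hL₁ 0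
  set A' : ℕ × List Bool → Bool → Set X := fun p b => A p b ∩ π τ ⁻¹' ball1 with hA'def
  have hA' : ∀ p ∈ nodes n, ∀ b, IsOpen (A' p b) ∧ (A' p b).Nonempty := by
    intro p hp b
    constructor
    · exact (hAb p hp b).1.inter (hball1o.preimage (contt5 hcont τ))
    · obtain ⟨x, hx, hπx⟩ := hτ (A p b, ball1) (hmemL₁ p hp b)
      exact ⟨x, hx, hπx⟩
  -- second hitting time: recurrence, with lower bound c
  set L₂ : List (Set X × Set X) :=
    (nodes n).flatMap (fun p => [(A' p false, A' p false), (A' p true, A' p true)]) with hL₂def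
  have hmemL₂ : ∀ p ∈ nodes n, ∀ b, (A' p b, A' p b) ∈ L₂ := by
    intro p hp b
    rw [hL₂def, List.mem_flatMap]
    refine ⟨p, hp, ?_⟩
    cases b <;> simp
  have hL₂ : ∀ q ∈ L₂, IsOpen q.1 ∧ q.1.Nonempty ∧ IsOpen q.2 ∧ q.2.Nonempty := by
    intro q hq
    rw [hL₂def, List.mem_flatMap] at hq
    obtain ⟨p, hp, hq⟩ := hq
    simp only [List.mem_cons, List.mem_singleton, List.not_mem_nil, or_false] at hq
    rcases hq with rfl | rfl
    · exact ⟨(hA' p hp false).1, (hA' p hp false).2, (hA' p hp false).1, (hA' p hp false).2⟩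
    · exact ⟨(hA' p hp true).1, (hA' p hp true).2, (hA' p hp true).1, (hA' p hp true).2⟩
  obtain ⟨σ, hcσ, hσ⟩ := hit_list hcont hid hadd hnontriv hwm L₂ hL₂ c
  set A'' : ℕ × List Bool → Bool → Set X := fun p b => A' p b ∩ π σ ⁻¹' (A' p b) with hA''def
  have hA'' : ∀ p ∈ nodes n, ∀ b, IsOpen (A'' p b) ∧ (A'' p b).Nonempty := by
    intro p hp b
    constructor
    · exact (hA' p hp b).1.inter ((hA' p hp b).1.preimage (contt5 hcont σ))
    · obtain ⟨x, hx, hπx⟩ := hσ (A' p b, A' p b) (hmemL₂ p hp b)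
      exact ⟨x, hx, hπx⟩
  -- final children
  have hCex : ∀ (p : ℕ × List Bool) (b : Bool), (IsOpen (A'' p b) ∧ (A'' p b).Nonempty) →
      ∃ C : Set X, IsOpen C ∧ C.Nonempty ∧ closure C ⊆ A'' p b ∧
        ∃ c0, C ⊆ Metric.ball c0 ((1/2:ℝ)^(n+1)) := by
    rintro p b ⟨h1, h2⟩
    exact shrink h1 h2 hrn1
  choose! C hC using hCex
  have hRex : ∀ m : ℕ, ∃ R : Set X, IsOpen R ∧ R.Nonempty ∧ closure R ⊆ B m ∧
      ∃ c0, R ⊆ Metric.ball c0 ((1/2:ℝ)^(n+1)) :=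
    fun m => shrink (hB m).1 (hB m).2 hrn1
  choose R hR using hRex
  refine ⟨fun q => if q.2 = [] then R q.1 else C (q.1, q.2.dropLast) (q.2.getLastD false),
    τ, σ, hcσ, ?_, ?_, ?_⟩
  · -- validity at stage n+1
    intro m l hml
    by_cases hl : l = []
    · subst hl
      simp only [if_pos rfl]
      exact ⟨(hR m).1, (hR m).2.1, (hR m).2.2.2⟩
    · simp only [if_neg hl]
      have hp : (m, l.dropLast) ∈ nodes n := by
        rw [mem_nodes]
        have : List.length l ≠ 0 := fun h0 => hl (List.length_eq_zero_iff.1 h0)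
        rw [List.length_dropLast]
        omega
      have h'' := hA'' (m, l.dropLast) hp (l.getLastD false)
      obtain ⟨hCo, hCn, hCc, hCs⟩ := hC (m, l.dropLast) (l.getLastD false) h''
      exact ⟨hCo, hCn, hCs⟩
  · -- new root inside B (n+1)
    simp only [if_pos rfl]
    exact (subset_closure).trans (hR (n+1)).2.2.1
  · -- relations between stage n and stage n+1
    intro m l hml
    have hp : (m, l) ∈ nodes n := (mem_nodes n m l).2 hml
    have hgc : ∀ b : Bool, (fun q : ℕ × List Bool =>
        if q.2 = [] then R q.1 else C (q.1, q.2.dropLast) (q.2.getLastD false)) (m, l ++ [b])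
        = C (m, l) b := by
      intro b
      have h1 : l ++ [b] ≠ [] := by simp
      simp only [if_neg h1, List.dropLast_concat, List.getLastD_concat]
    have hchain : ∀ b : Bool, closure (C (m, l) b) ⊆ A'' (m, l) b :=
      fun b => (hC (m, l) b (hA'' (m, l) hp b)).2.2.1
    have hsub1 : ∀ b, A'' (m, l) b ⊆ A' (m, l) b := fun b => inter_subset_left
    have hsub2 : ∀ b, A' (m, l) b ⊆ A (m, l) b := fun b => inter_subset_left
    have hsubf : ∀ b, A (m, l) b ⊆ f (m, l) :=
      fun b => subset_closure.trans (hAb (m, l) hp b).2.2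
    refine ⟨?_, ?_, ?_⟩
    · intro b
      rw [hgc b]
      exact (hchain b).trans ((hsub1 b).trans ((hsub2 b).trans (hsubf b)))
    · rw [hgc false, hgc true]
      apply eq_empty_of_subset_empty
      rw [← hAdisj (m, l) hp]
      exact inter_subset_inter
        (((hchain false).trans ((hsub1 false).trans (hsub2 false))).trans subset_closure)
        (((hchain true).trans ((hsub1 true).trans (hsub2 true))).trans subset_closure)
    · intro b x hx
      rw [hgc b] at hx
      have hx'' : x ∈ A'' (m, l) b := hchain b hx
      have hx' : x ∈ A' (m, l) b := hsub1 b hx''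
      constructor
      · have : π τ x ∈ ball1 := hx'.2
        exact le_of_lt (Metric.mem_ball.1 this)
      · have : π σ x ∈ A' (m, l) b := hx''.2
        exact hsubf b (hsub2 b this)

end Aux5


section Aux6

private lemma main_aux {X : Type*} [MetricSpace X] [CompleteSpace X] [SecondCountableTopology X]
    (hnontriv : ∃ a b : X, a ≠ b) (π : NNReal → X → X)
    (hcont : Continuous fun q : NNReal × X => π q.1 q.2)
    (hid : ∀ x : X, π 0 x = x)
    (hadd : ∀ s t : NNReal, ∀ x : X, π s (π t x) = π (s + t) x)
    (hwm : ∀ W₁ W₂ : Set (X × X), IsOpen W₁ → W₁.Nonempty → IsOpen W₂ → W₂.Nonempty →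
      ∃ t : NNReal, ∃ w ∈ W₁, (π t w.1, π t w.2) ∈ W₂)
    (F : ℕ → Set NNReal) (hF : ∀ n, IsCompact (F n)) :
    ∃ Θ : Set X, Dense Θ ∧ ¬ Θ.Countable ∧
      ∃ (p : X) (t s : ℕ → NNReal), (∀ n, s n ∉ F n) ∧
        (∀ x ∈ Θ, Tendsto (fun n => π (t n) x) atTop (𝓝 p)) ∧
        (∀ x ∈ Θ, Tendsto (fun n => π (s n) x) atTop (𝓝 x)) := by
  classical
  obtain ⟨a0, b0, hab0⟩ := hnontriv
  have hnontriv' : ∃ a b : X, a ≠ b := ⟨a0, b0, hab0⟩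
  -- countable basis of nonempty open sets
  obtain ⟨bas, hbas_count, hbas_empty, hbas⟩ := TopologicalSpace.exists_countable_basis X
  have hbasne : bas.Nonempty := by
    have ha0 : a0 ∈ ⋃₀ bas := by rw [hbas.sUnion_eq]; trivial
    obtain ⟨v, hv, -⟩ := ha0
    exact ⟨v, hv⟩
  obtain ⟨B, hBdef⟩ := hbas_count.exists_eq_range hbasne
  have hB : ∀ k, IsOpen (B k) ∧ (B k).Nonempty := by
    intro k
    have hk : B k ∈ bas := by rw [hBdef]; exact mem_range_self k
    refine ⟨hbas.isOpen hk, nonempty_iff_ne_empty.2 (fun h => hbas_empty ?_)⟩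
    rwa [h] at hk
  have hBbasis : ∀ U : Set X, IsOpen U → U.Nonempty → ∃ k, B k ⊆ U := by
    rintro U hU ⟨x, hx⟩
    obtain ⟨v, hv, hxv, hvU⟩ := hbas.exists_subset_of_mem_open hx hU
    rw [hBdef] at hv
    obtain ⟨k, rfl⟩ := hv
    exact ⟨k, hvU⟩
  -- bounds for the compact sets F n
  have hMex : ∀ n, ∃ M : NNReal, ∀ a ∈ F n, a < M := by
    intro n
    obtain ⟨M, hM⟩ := (hF n).bddAbove
    exact ⟨M + 1, fun a ha => lt_of_le_of_lt (hM ha) (lt_add_of_pos_right M one_pos)⟩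
  choose M hMlt using hMex
  -- the inductive step, as a total function
  have hstepex : ∀ (n : ℕ) (f : ℕ × List Bool → Set X),
      (∀ m l, m + List.length l = n → IsOpen (f (m,l)) ∧ (f (m,l)).Nonempty) →
      ∃ (g : ℕ × List Bool → Set X) (τ σ : NNReal),
        M n ≤ σ ∧
        (∀ m l, m + List.length l = n + 1 → IsOpen (g (m,l)) ∧ (g (m,l)).Nonempty ∧
           ∃ c0, g (m,l) ⊆ Metric.ball c0 ((1/2 : ℝ)^(n+1))) ∧
        (g (n+1, []) ⊆ B (n+1)) ∧
        (∀ m l, m + List.length l = n →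
          (∀ b, closure (g (m, l ++ [b])) ⊆ f (m, l)) ∧
          (closure (g (m, l ++ [false])) ∩ closure (g (m, l ++ [true])) = ∅) ∧
          (∀ b, ∀ x ∈ closure (g (m, l ++ [b])),
             dist (π τ x) a0 ≤ (1/2 : ℝ)^n ∧ π σ x ∈ f (m, l))) :=
    fun n f hf => step hcont hid hadd hnontriv' hwm a0 B hB (M n) n f hf
  choose! g' τ' σ' hstep' using hstepex
  -- initial stage
  obtain ⟨R₀, hR₀o, hR₀n, hR₀c, hR₀s⟩ :=
    shrink (hB 0).1 (hB 0).2 (show (0:ℝ) < (1/2:ℝ)^0 by norm_num)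
  set f₀ : ℕ × List Bool → Set X := fun _ => R₀ with hf₀def
  set G : ℕ → (ℕ × List Bool → Set X) :=
    fun n => Nat.rec (motive := fun _ => (ℕ × List Bool → Set X)) f₀ (fun n f => g' n f) n
    with hGdef
  have hGsucc : ∀ n, G (n+1) = g' n (G n) := fun n => by rw [hGdef]
  set t : ℕ → NNReal := fun n => τ' n (G n) with htdef
  set s : ℕ → NNReal := fun n => σ' n (G n) with hsdef
  -- stage invariants
  have hInv : ∀ n, (∀ m l, m + List.length l = n → IsOpen (G n (m,l)) ∧ (G n (m,l)).Nonempty ∧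
      ∃ c0, G n (m,l) ⊆ Metric.ball c0 ((1/2:ℝ)^n)) ∧ G n (n, []) ⊆ B n := by
    intro n
    induction n with
    | zero =>
        constructor
        · intro m l hml
          refine ⟨hR₀o, hR₀n, ?_⟩
          exact hR₀s
        · exact subset_closure.trans hR₀c
    | succ n ih =>
        have hfn : ∀ m l, m + List.length l = n → IsOpen (G n (m,l)) ∧ (G n (m,l)).Nonempty :=
          fun m l hml => ⟨(ih.1 m l hml).1, (ih.1 m l hml).2.1⟩
        obtain ⟨hσ, hv, hroot, hrel⟩ := hstep' n (G n) hfn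
        rw [hGsucc]
        exact ⟨hv, hroot⟩
  have hRel : ∀ n, (M n ≤ s n) ∧ ∀ m l, m + List.length l = n →
      (∀ b, closure (G (n+1) (m, l ++ [b])) ⊆ G n (m, l)) ∧
      (closure (G (n+1) (m, l ++ [false])) ∩ closure (G (n+1) (m, l ++ [true])) = ∅) ∧
      (∀ b, ∀ x ∈ closure (G (n+1) (m, l ++ [b])),
         dist (π (t n) x) a0 ≤ (1/2:ℝ)^n ∧ π (s n) x ∈ G n (m, l)) := by
    intro n
    have hfn : ∀ m l, m + List.length l = n → IsOpen (G n (m,l)) ∧ (G n (m,l)).Nonempty :=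
      fun m l hml => ⟨((hInv n).1 m l hml).1, ((hInv n).1 m l hml).2.1⟩
    obtain ⟨hσ, hv, hroot, hrel⟩ := hstep' n (G n) hfn
    rw [hGsucc, htdef, hsdef]
    exact ⟨hσ, hrel⟩
  -- branch sets
  set N : ℕ → (ℕ → Bool) → ℕ → Set X :=
    fun m ω k => G (m + k) (m, (List.range k).map ω) with hNdef
  have hNval : ∀ m ω k, IsOpen (N m ω k) ∧ (N m ω k).Nonempty ∧
      ∃ c0, N m ω k ⊆ Metric.ball c0 ((1/2:ℝ)^(m+k)) := by
    intro m ω k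
    exact (hInv (m+k)).1 m _ (by simp)
  have hpre : ∀ (ω : ℕ → Bool) k,
      (List.range (k+1)).map ω = (List.range k).map ω ++ [ω k] := by
    intro ω k
    rw [List.range_succ, List.map_append]
    simp
  have hN2 : ∀ m ω k, closure (N m ω (k+1)) ⊆ N m ω k := by
    intro m ω k
    have h := ((hRel (m+k)).2 m ((List.range k).map ω) (by simp)).1 (ω k)
    simp only [hNdef]
    rw [hpre ω k]
    exact h
  have hN3 : ∀ m ω k, ∀ x ∈ closure (N m ω (k+1)),
      dist (π (t (m+k)) x) a0 ≤ (1/2:ℝ)^(m+k) ∧ π (s (m+k)) x ∈ N m ω k := by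
    intro m ω k x hx
    have h := ((hRel (m+k)).2 m ((List.range k).map ω) (by simp)).2.2 (ω k)
    apply h
    simp only [hNdef] at hx
    rw [hpre ω k] at hx
    exact hx
  have hNmono : ∀ m ω k j, k ≤ j → N m ω j ⊆ N m ω k := by
    intro m ω k j hkj
    induction j, hkj using Nat.le_induction with
    | base => exact subset_rfl
    | succ j hj ih => exact (subset_closure.trans (hN2 m ω j)).trans ih
  -- branch limit points
  have hxkex : ∀ (m : ℕ) (ω : ℕ → Bool) (k : ℕ), ∃ x, x ∈ N m ω k :=
    fun m ω k => (hNval m ω k).2.1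
  choose xk hxk using hxkex
  have hcauchy : ∀ m ω, CauchySeq (fun k => xk m ω k) := by
    intro m ω
    apply cauchySeq_of_le_tendsto_0 (fun k => 2 * (1/2:ℝ)^k)
    · intro i j K hKi hKj
      obtain ⟨c0, hc0⟩ := (hNval m ω K).2.2
      have h1 : dist (xk m ω i) c0 < (1/2:ℝ)^(m+K) :=
        Metric.mem_ball.1 (hc0 (hNmono m ω K i hKi (hxk m ω i)))
      have h2 : dist (xk m ω j) c0 < (1/2:ℝ)^(m+K) :=
        Metric.mem_ball.1 (hc0 (hNmono m ω K j hKj (hxk m ω j)))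
      have h3 : ((1:ℝ)/2)^(m+K) ≤ (1/2)^K := by
        apply pow_le_pow_of_le_one (by norm_num) (by norm_num)
        omega
      calc dist (xk m ω i) (xk m ω j) ≤ dist (xk m ω i) c0 + dist (xk m ω j) c0 :=
            dist_triangle_right _ _ _
        _ ≤ 2 * (1/2:ℝ)^K := by linarith
    · have h0 : Tendsto (fun k : ℕ => ((1:ℝ)/2)^k) atTop (𝓝 0) :=
        tendsto_pow_atTop_nhds_zero_of_lt_one (by norm_num) (by norm_num)
      simpa using h0.const_mul (2:ℝ)
  have hΦex : ∀ m ω, ∃ p, Tendsto (fun k => xk m ω k) atTop (𝓝 p) :=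
    fun m ω => cauchySeq_tendsto_of_complete (hcauchy m ω)
  choose Φ hΦ using hΦex
  have hΦmem : ∀ m ω k, Φ m ω ∈ closure (N m ω k) := by
    intro m ω k
    apply mem_closure_of_tendsto (hΦ m ω)
    filter_upwards [eventually_ge_atTop k] with j hj
    exact hNmono m ω k j hj (hxk m ω j)
  -- the set Θ
  refine ⟨{x | ∃ m ω, Φ m ω = x}, ?_, ?_, a0, t, s, ?_, ?_, ?_⟩
  · -- dense
    rw [dense_iff_inter_open]
    intro U hU hUne
    obtain ⟨k, hk⟩ := hBbasis U hU hUne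
    refine ⟨Φ k (fun _ => false), ?_, k, (fun _ => false), rfl⟩
    apply hk
    have h0 : Φ k (fun _ => false) ∈ N k (fun _ => false) 0 :=
      hN2 k (fun _ => false) 0 (hΦmem k (fun _ => false) 1)
    exact (hInv k).2 h0
  · -- uncountable
    intro hc
    have hinj : Function.Injective (fun ω : ℕ → Bool => Φ 0 ω) := by
      intro ω ω' he
      by_contra hne
      have hex : ∃ k, ω k ≠ ω' k := by
        by_contra h
        push_neg at h
        exact hne (funext h)
      have hk : ω (Nat.find hex) ≠ ω' (Nat.find hex) := Nat.find_spec hex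
      set k := Nat.find hex with hkdef
      have hmin : ∀ i, i < k → ω i = ω' i := by
        intro i hi
        by_contra h
        exact Nat.find_min hex hi h
      have hpree : (List.range k).map ω = (List.range k).map ω' := by
        apply List.map_congr_left
        intro i hi
        exact hmin i (List.mem_range.1 hi)
      have hdisj := ((hRel (0 + k)).2 0 ((List.range k).map ω) (by simp)).2.1
      have h1 : Φ 0 ω ∈ closure (G ((0+k)+1) (0, (List.range k).map ω ++ [ω k])) := by
        have h := hΦmem 0 ω (k+1)
        simp only [hNdef] at h
        rwa [hpre ω k] at h
      have h2 : Φ 0 ω ∈ closure (G ((0+k)+1) (0, (List.range k).map ω ++ [ω' k])) := by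
        have h := hΦmem 0 ω' (k+1)
        simp only [hNdef] at h
        rw [hpre ω' k, ← hpree] at h
        rw [show Φ 0 ω = Φ 0 ω' from he]
        exact h
      have hmem : Φ 0 ω ∈ (∅ : Set X) := by
        cases hbω : ω k with
        | false =>
            have hbω' : ω' k = true := by
              cases hbω' : ω' k
              · exact absurd (hbω.trans hbω'.symm) hk
              · rfl
            rw [← hdisj]
            constructor
            · rw [hbω] at h1; exact h1
            · rw [hbω'] at h2; exact h2
        | true =>
            have hbω' : ω' k = false := by
              cases hbω' : ω' k
              · rfl
              · exact absurd (hbω.trans hbω'.symm) hk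
            rw [← hdisj]
            constructor
            · rw [hbω'] at h2; exact h2
            · rw [hbω] at h1; exact h1
      exact hmem
    have hsub : range (fun ω : ℕ → Bool => Φ 0 ω) ⊆ {x | ∃ m ω, Φ m ω = x} := by
      rintro x ⟨ω, rfl⟩
      exact ⟨0, ω, rfl⟩
    have hcr : (range (fun ω : ℕ → Bool => Φ 0 ω)).Countable := hc.mono hsub
    have hcount : Countable (ℕ → Bool) := by
      have := hcr.to_subtype
      exact Countable.of_equiv _ (Equiv.ofInjective _ hinj).symm
    obtain ⟨fsur, hsur⟩ := exists_surjective_nat (ℕ → Bool)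
    apply Function.cantor_surjective (fun n => {k : ℕ | fsur n k = true})
    intro S
    obtain ⟨n, hn⟩ := hsur (fun k => decide (k ∈ S))
    refine ⟨n, ?_⟩
    ext k
    simp [hn]
  · -- s n avoids F n
    intro n hsn
    exact absurd ((hRel n).1) (not_le.2 (hMlt n _ hsn))
  · -- attraction to a0
    rintro x ⟨m, ω, rfl⟩
    rw [tendsto_iff_dist_tendsto_zero]
    apply squeeze_zero' (Eventually.of_forall fun n => dist_nonneg) ?_
      (tendsto_pow_atTop_nhds_zero_of_lt_one (by norm_num) (by norm_num) :
        Tendsto (fun n : ℕ => ((1:ℝ)/2)^n) atTop (𝓝 0))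
    filter_upwards [eventually_ge_atTop m] with n hn
    have h := (hN3 m ω (n - m) _ (hΦmem m ω ((n-m)+1))).1
    rwa [Nat.add_sub_cancel' hn] at h
  · -- recurrence
    rintro x ⟨m, ω, rfl⟩
    rw [tendsto_iff_dist_tendsto_zero]
    have htb : Tendsto (fun n : ℕ => 2 * ((1:ℝ)/2)^n) atTop (𝓝 0) := by
      have h0 : Tendsto (fun k : ℕ => ((1:ℝ)/2)^k) atTop (𝓝 0) :=
        tendsto_pow_atTop_nhds_zero_of_lt_one (by norm_num) (by norm_num)
      simpa using h0.const_mul (2:ℝ)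
    apply squeeze_zero' (Eventually.of_forall fun n => dist_nonneg) ?_ htb
    filter_upwards [eventually_ge_atTop m] with n hn
    have h := hN3 m ω (n - m) _ (hΦmem m ω ((n-m)+1))
    obtain ⟨c0, hc0⟩ := (hNval m ω (n - m)).2.2
    have h1 : dist (π (s (m + (n - m))) (Φ m ω)) c0 < (1/2:ℝ)^(m+(n-m)) :=
      Metric.mem_ball.1 (hc0 h.2)
    have h2 : dist (Φ m ω) c0 < (1/2:ℝ)^(m+(n-m)) :=
      Metric.mem_ball.1 (hc0 (hN2 m ω (n-m) (hΦmem m ω ((n-m)+1))))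
    have h3 : dist (π (s (m + (n - m))) (Φ m ω)) (Φ m ω) ≤ 2 * (1/2:ℝ)^(m+(n-m)) := by
      calc dist (π (s (m + (n - m))) (Φ m ω)) (Φ m ω)
          ≤ dist (π (s (m + (n - m))) (Φ m ω)) c0 + dist (Φ m ω) c0 := dist_triangle_right _ _ _
        _ ≤ 2 * (1/2:ℝ)^(m+(n-m)) := by linarith
    rwa [Nat.add_sub_cancel' hn] at h3

end Aux6

/-- A topologically weakly mixing jointly continuous semiflow `π : ℝ≥0 × X → X` on a
Polish space with at least two points is densely multi-dimensional Li-Yorke chaotic. -/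
theorem c0_weaklyMixing_densely_multidimensional_LiYorke
    {X : Type*} [TopologicalSpace X] [PolishSpace X]
    (hnontriv : ∃ a b : X, a ≠ b)
    (π : NNReal → X → X)
    (hcont : Continuous fun q : NNReal × X => π q.1 q.2)
    (hid : ∀ x : X, π 0 x = x)
    (hadd : ∀ s t : NNReal, ∀ x : X, π s (π t x) = π (s + t) x)
    (hwm : ∀ W₁ W₂ : Set (X × X), IsOpen W₁ → W₁.Nonempty → IsOpen W₂ → W₂.Nonempty →
      ∃ t : NNReal, ∃ w ∈ W₁, (π t w.1, π t w.2) ∈ W₂) :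
    ∀ F : ℕ → Set NNReal, (∀ n, IsCompact (F n)) → Monotone F →
      ∃ Θ : Set X, Dense Θ ∧ ¬ Θ.Countable ∧
        ∀ k : ℕ, 2 ≤ k → ∀ z : Fin k → X, (∀ i, z i ∈ Θ) → Function.Injective z →
          ∃ p : X, ∃ t s : ℕ → NNReal, (∀ n, s n ∉ F n) ∧
            (∀ i, Tendsto (fun n => π (t n) (z i)) atTop (𝓝 p)) ∧
            (∀ i, Tendsto (fun n => π (s n) (z i)) atTop (𝓝 (z i))) := by
  intro F hF _hmono
  letI := TopologicalSpace.upgradeIsCompletelyMetrizable X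
  obtain ⟨Θ, hdense, hunc, p, t, s, hsF, ht, hs⟩ :=
    main_aux hnontriv π hcont hid hadd hwm F hF
  exact ⟨Θ, hdense, hunc, fun k _hk z hz _hinj =>
    ⟨p, t, s, hsF, fun i => ht _ (hz i), fun i => hs _ (hz i)⟩⟩
end

section
/- Let (T,X) be a sensitive topological semiflow on a uniform space (X,𝓤) which is a Baire space. Then there exists an entourage ε ∈ 𝓤 (a sensitivity index) such that for every sequence (F_n)_{n≥1} of compact subsets of T and every x ∈ X, the (ε, (F_n))-stable set W = ⋃_{n≥1} ⋂_{t ∈ T \ F_n} {y ∈ X : t•y ∈ closure(ε[t•x])} is meagre (of the first category) in X, where ε[z] = {w ∈ X : (z,w) ∈ ε}. -/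
open Filter Topology Set Uniformity

/-- For a sensitive topological semiflow on a uniform Baire space there is a sensitivity
index `ε ∈ 𝓤 X` such that for every sequence `(F n)` of compact subsets of `T` and every
`x ∈ X`, the `(ε,(F n))`-stable set
`⋃ n, ⋂ (t ∉ F n), {y : t • y ∈ closure (ε[t • x])}` is meagre in `X`. -/
theorem sensitive_stable_set_meagre
    {T X : Type*} [Monoid T] [TopologicalSpace T] [ContinuousMul T]
    [UniformSpace X] [BaireSpace X] [MulAction T X] [ContinuousSMul T X]
    (hsens : ∃ ε ∈ 𝓤 X, ∀ x : X, ∀ V ∈ 𝓝 x, ∃ y ∈ V, ∃ t : T, (t • x, t • y) ∉ ε) :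
    ∃ ε ∈ 𝓤 X,
      (∀ x : X, ∀ V ∈ 𝓝 x, ∃ y ∈ V, ∃ t : T, (t • x, t • y) ∉ ε) ∧
      ∀ F : ℕ → Set T, (∀ n, IsCompact (F n)) → ∀ x : X,
        IsMeagre (⋃ n : ℕ, ⋂ t ∈ {t : T | t ∉ F n},
          {y : X | t • y ∈ closure {w : X | (t • x, w) ∈ ε}}) := by
  obtain ⟨ε₀, hε₀, hsen⟩ := hsens
  obtain ⟨s, hsU, hssymm, hscomp⟩ := comp_symm_mem_uniformity_sets hε₀
  obtain ⟨c, ⟨hcU, hcclosed⟩, hcs⟩ := uniformity_hasBasis_closed.mem_iff.mp hsU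
  set δ : Set (X × X) := SetRel.symmetrize c with hδdef
  have hδU : δ ∈ 𝓤 X := symmetrize_mem_uniformity hcU
  have hδsymm : SetRel.IsSymm δ := SetRel.isSymm_symmetrize (R := c)
  have hδclosed : IsClosed δ := hcclosed.inter (hcclosed.preimage continuous_swap)
  have hδs : δ ⊆ s := (SetRel.symmetrize_subset_self (R := c)).trans hcs
  have hδε₀ : δ ⊆ ε₀ := fun p hp =>
    hscomp ⟨p.1, refl_mem_uniformity hsU, by exact hδs hp⟩
  refine ⟨δ, hδU, ?_, ?_⟩
  · intro x V hV
    obtain ⟨y, hyV, t, ht⟩ := hsen x V hV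
    exact ⟨y, hyV, t, fun h => ht (hδε₀ h)⟩
  · intro F hF x
    apply isMeagre_iUnion
    intro n
    set A : Set X := ⋂ t ∈ {t : T | t ∉ F n},
      {y : X | t • y ∈ closure {w : X | (t • x, w) ∈ δ}} with hAdef
    have hAclosed : IsClosed A := by
      refine isClosed_biInter fun t ht => ?_
      exact isClosed_closure.preimage (continuous_const_smul t)
    -- each ball of δ is closed
    have hball : ∀ z : X, closure {w : X | (z, w) ∈ δ} = {w : X | (z, w) ∈ δ} := by
      intro z
      refine IsClosed.closure_eq ?_
      exact hδclosed.preimage (Continuous.prodMk_right z)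
    -- A has empty interior
    have hint : interior A = ∅ := by
      by_contra h
      obtain ⟨z, hz⟩ := nonempty_iff_ne_empty.mpr h
      -- for every t : T, find neighborhoods W t of t, V t of z forcing ε₀-closeness
      have key : ∀ t : T, ∃ W : Set T, ∃ Vt : Set X, W ∈ 𝓝 t ∧ Vt ∈ 𝓝 z ∧
          ∀ u ∈ W, ∀ y ∈ Vt, (u • z, u • y) ∈ ε₀ := by
        intro t
        have hcont : ContinuousAt (fun p : T × X => p.1 • p.2) (t, z) :=
          continuous_smul.continuousAt
        have hmem : {w : X | (t • z, w) ∈ s} ∈ 𝓝 (t • z) :=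
          UniformSpace.ball_mem_nhds _ hsU
        have h2 : {p : T × X | (t • z, p.1 • p.2) ∈ s} ∈ 𝓝 (t, z) := hcont hmem
        rw [nhds_prod_eq, Filter.mem_prod_iff] at h2
        obtain ⟨W, hW, Vt, hVt, hsub⟩ := h2
        refine ⟨W, Vt, hW, hVt, fun u hu y hy => ?_⟩
        have h1 : (t • z, u • z) ∈ s := hsub (mk_mem_prod hu (mem_of_mem_nhds hVt))
        have h2 : (t • z, u • y) ∈ s := hsub (mk_mem_prod hu hy)
        exact hscomp ⟨t • z, hssymm.symm _ _ h1, h2⟩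
      choose W Vt hW hVt hprop using key
      -- cover F n by finitely many W t
      obtain ⟨I, hIF, hcov⟩ := (hF n).elim_nhds_subcover W (fun t _ => hW t)
      set V : Set X := interior A ∩ ⋂ t ∈ I, Vt t with hVdef
      have hVnhds : V ∈ 𝓝 z := by
        refine Filter.inter_mem (isOpen_interior.mem_nhds hz) ?_
        exact (Filter.biInter_mem I.finite_toSet).mpr fun t _ => hVt t
      obtain ⟨y, hyV, t, ht⟩ := hsen z V hVnhds
      -- case t ∈ F n : contradiction with equicontinuity on F n
      by_cases htF : t ∈ F n
      · obtain ⟨t', ht'I, htW⟩ := Set.mem_iUnion₂.mp (hcov htF)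
        exact ht (hprop t' t htW y (Set.biInter_subset_of_mem ht'I hyV.2))
      · -- case t ∉ F n : z and y are in A
        have hzA : z ∈ A := interior_subset hz
        have hyA : y ∈ A := interior_subset hyV.1
        have hz' : (t • x, t • z) ∈ δ := by
          have := Set.mem_iInter₂.mp hzA t htF
          rwa [Set.mem_setOf_eq, hball] at this
        have hy' : (t • x, t • y) ∈ δ := by
          have := Set.mem_iInter₂.mp hyA t htF
          rwa [Set.mem_setOf_eq, hball] at this
        exact ht (hscomp ⟨t • x, hδs (hδsymm.symm _ _ hz'), hδs hy'⟩)
    rw [IsMeagre]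
    exact residual_of_dense_open hAclosed.isOpen_compl
      (interior_eq_empty_iff_dense_compl.mp hint)
end

section
/- Every topologically weakly mixing semiflow on a Hausdorff uniform space with at least two points is sensitive to initial conditions. That is, if (T,X) is a topological semiflow on a Hausdorff uniform space (X,𝓤) with at least two points, and the diagonal action of T on X × X is topologically transitive, then there is an entourage ε ∈ 𝓤 such that for every x ∈ X and every neighborhood V of x there exist y ∈ V and t ∈ T with (t•x, t•y) ∉ ε. -/
open Filter Topology Set Uniformity

/-- Every topologically weakly mixing semiflow on a Hausdorff uniform space with at
least two points is sensitive to initial conditions. -/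
theorem weaklyMixing_implies_sensitive
    {T X : Type*} [Monoid T] [TopologicalSpace T] [ContinuousMul T]
    [UniformSpace X] [T2Space X] [MulAction T X] [ContinuousSMul T X]
    (hnontriv : ∃ a b : X, a ≠ b)
    (hwm : ∀ W₁ W₂ : Set (X × X), IsOpen W₁ → W₁.Nonempty → IsOpen W₂ → W₂.Nonempty →
      ∃ t : T, ∃ w ∈ W₁, (t • w.1, t • w.2) ∈ W₂) :
    ∃ ε ∈ 𝓤 X, ∀ x : X, ∀ V ∈ 𝓝 x, ∃ y ∈ V, ∃ t : T, (t • x, t • y) ∉ ε := by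
  obtain ⟨a, b, hab⟩ := hnontriv
  -- find an entourage not containing (a, b)
  have hsep : ∃ ε₀ ∈ 𝓤 X, (a, b) ∉ ε₀ := by
    by_contra h
    push_neg at h
    have : Inseparable a b := inseparable_iff_ker_uniformity.2 (mem_sInter.2 fun s hs => h s hs)
    exact hab this.eq
  obtain ⟨ε₀, hε₀, habε₀⟩ := hsep
  -- δ symmetric with δ ○ δ ○ δ ⊆ ε₀
  obtain ⟨δ, hδ, hδsymm, hδsub⟩ := comp_comp_symm_mem_uniformity_sets hε₀
  -- η symmetric with η ○ η ⊆ δ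
  obtain ⟨η, hη, hηsymm, hηsub⟩ := comp_symm_mem_uniformity_sets hδ
  refine ⟨η, hη, fun x V hV => ?_⟩
  obtain ⟨V', hV'sub, hV'open, hxV'⟩ := mem_nhds_iff.1 hV
  -- apply weak mixing to V'×V' and interiors of δ-balls around a and b
  have hBa : a ∈ interior (UniformSpace.ball a δ) :=
    mem_interior_iff_mem_nhds.2 (UniformSpace.ball_mem_nhds a hδ)
  have hBb : b ∈ interior (UniformSpace.ball b δ) :=
    mem_interior_iff_mem_nhds.2 (UniformSpace.ball_mem_nhds b hδ)
  obtain ⟨t, w, hw, hw'⟩ := hwm (V' ×ˢ V')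
      (interior (UniformSpace.ball a δ) ×ˢ interior (UniformSpace.ball b δ))
      (hV'open.prod hV'open) ⟨(x, x), hxV', hxV'⟩
      (isOpen_interior.prod isOpen_interior) ⟨(a, b), hBa, hBb⟩
  have h1 : t • w.1 ∈ UniformSpace.ball a δ := interior_subset hw'.1
  have h2 : t • w.2 ∈ UniformSpace.ball b δ := interior_subset hw'.2
  -- at least one of w.1, w.2 separates from x under t
  by_contra h
  push_neg at h
  have k1 : (t • x, t • w.1) ∈ η := h w.1 (hV'sub hw.1) t
  have k2 : (t • x, t • w.2) ∈ η := h w.2 (hV'sub hw.2) t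
  have h12 : (t • w.1, t • w.2) ∈ δ :=
    hηsub (SetRel.prodMk_mem_comp ((hηsymm.symm _ _ k1)) k2)
  have : (a, b) ∈ ε₀ :=
    hδsub (SetRel.prodMk_mem_comp (SetRel.prodMk_mem_comp h1 h12) ((hδsymm.symm _ _ h2)))
  exact habε₀ this
end
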